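/- Let λ, μ, ν > 0 with σ := λ + νμ ≠ 0, and η ∈ ℝ. Then V(t) = (η/σ)·(λ + νμ·exp(λσt)) satisfies the Volterra integral equation V(t) = η + νλμ·∫₀ᵗ exp(λ²(t−τ))·V(τ)dτ for all t ≥ 0. -/

import Mathlib

theorem stmt12 (lam μ ν η : ℝ) (hlam : 0 < lam) (hμ : 0 < μ) (hν : 0 < ν)
    (σ : ℝ) (hσdef : σ = lam + ν * μ) (hσ : σ ≠ 0)
    (V : ℝ → ℝ)
    (hV : ∀ t : ℝ, V t = η / σ * (lam + ν * μ * Real.exp (lam * σ * t))) :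
    ∀ t : ℝ, 0 ≤ t →
      V t = η + ν * lam * μ * ∫ τ in (0:ℝ)..t, Real.exp (lam ^ 2 * (t - τ)) * V τ := by
  have hVf : V = fun t => η / σ * (lam + ν * μ * Real.exp (lam * σ * t)) := funext hV
  subst hVf
  intro t _
  beta_reduce
  have hl : lam ≠ 0 := hlam.ne'
  have key : (∫ τ in (0:ℝ)..t,
        Real.exp (lam ^ 2 * (t - τ)) * (η / σ * (lam + ν * μ * Real.exp (lam * σ * τ))))
      = η / (σ * lam) * (Real.exp (lam * σ * t) - 1) := by
    have hF : ∀ τ ∈ Set.uIcc (0:ℝ) t,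
        HasDerivAt (fun τ => η/σ * (-Real.exp (lam^2*(t-τ))/lam
            + Real.exp (lam^2*t) * Real.exp (lam*ν*μ*τ)/lam))
          (Real.exp (lam ^ 2 * (t - τ)) * (η / σ * (lam + ν * μ * Real.exp (lam * σ * τ)))) τ := by
      intro τ _
      have h1 : HasDerivAt (fun τ : ℝ => lam^2*(t-τ)) (-lam^2) τ := by
        simpa using ((hasDerivAt_const τ t).sub (hasDerivAt_id τ)).const_mul (lam^2)
      have h2 := h1.exp
      have h3 : HasDerivAt (fun τ : ℝ => lam*ν*μ*τ) (lam*ν*μ) τ := by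
        simpa using (hasDerivAt_id τ).const_mul (lam*ν*μ)
      have h4 := h3.exp
      have h5 := ((h2.div_const lam).neg.add
        ((h4.const_mul (Real.exp (lam^2*t))).div_const lam)).const_mul (η/σ)
      convert h5 using 1
      · rfl
      · rfl
      · funext y; simp only [Pi.add_apply, Pi.neg_apply]; ring
      · have e1 : Real.exp (lam^2*(t-τ)) * Real.exp (lam * σ * τ)
            = Real.exp (lam^2*t) * Real.exp (lam*ν*μ*τ) := by
          rw [← Real.exp_add, ← Real.exp_add, hσdef]; ring_nf
        field_simp
        rw [show lam * τ * σ = lam * σ * τ by ring, show lam * τ * ν * μ = lam * ν * μ * τ by ring]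
        linear_combination (η * ν * μ) * e1
    have hcont : IntervalIntegrable (fun τ =>
        Real.exp (lam ^ 2 * (t - τ)) * (η / σ * (lam + ν * μ * Real.exp (lam * σ * τ))))
        MeasureTheory.volume 0 t := by
      apply Continuous.intervalIntegrable
      continuity
    rw [intervalIntegral.integral_eq_sub_of_hasDerivAt hF hcont]
    rw [show lam^2*(t-t) = 0 by ring, show lam^2*(t-0) = lam^2*t by ring,
      show lam*ν*μ*(0:ℝ) = 0 by ring, Real.exp_zero]
    have e2 : Real.exp (lam^2*t) * Real.exp (lam*ν*μ*t) = Real.exp (lam*σ*t) := by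
      rw [← Real.exp_add, hσdef]; ring_nf
    linear_combination (η/(σ*lam)) * e2
  rw [key]
  field_simp
  rw [hσdef]
  ring
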